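/- Let R be a ring such that for every a in R the element a - a^3 is nilpotent. Then every element of R is the sum of a tripotent and a nilpotent that commute with each other. -/

import Mathlib

/-- Idempotents lift along the nilradical in a commutative ring. -/
lemma lift_idem_aux {A : Type*} [CommRing A] (t : A) (ht : IsNilpotent (t - t ^ 2)) :
    ∃ e : A, e ^ 2 = e ∧ IsNilpotent (e - t) := by
  set f : A →+* A ⧸ nilradical A := Ideal.Quotient.mk (nilradical A) with hf
  have hker : ∀ x ∈ RingHom.ker f, IsNilpotent x := by
    intro x hx
    rw [hf, Ideal.mk_ker, mem_nilradical] at hx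
    exact hx
  have hidem : IsIdempotentElem (f t) := by
    rw [IsIdempotentElem, ← map_mul, ← sub_eq_zero, ← map_sub]
    rw [hf]
    rw [Ideal.Quotient.eq_zero_iff_mem, mem_nilradical]
    have : t * t - t = -(t - t ^ 2) := by ring
    rw [this]
    exact ht.neg
  obtain ⟨e, he, hfe⟩ := exists_isIdempotentElem_eq_of_ker_isNilpotent f hker (f t)
    ⟨t, rfl⟩ hidem
  refine ⟨e, by simpa [IsIdempotentElem, sq] using he, ?_⟩
  have : e - t ∈ RingHom.ker f := by
    rw [RingHom.mem_ker, map_sub, hfe, sub_self]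
  exact hker _ this

/-- Key lemma in a commutative ring: if `a - a^3` and `6` are nilpotent, then `a` is a
tripotent plus a nilpotent. -/
lemma key_comm {A : Type*} [Ring A] (hc : ∀ x y : A, x * y = y * x) (a : A)
    (h1 : IsNilpotent (a - a ^ 3)) (h6 : IsNilpotent (6 : A)) :
    ∃ p : A, p ^ 3 = p ∧ IsNilpotent (a - p) := by
  letI : CommRing A := { (inferInstance : Ring A) with mul_comm := hc }
  set t : A := 2 * a ^ 2 + 5 * a with htdef
  set s : A := 2 * a ^ 2 + 4 * a with hsdef
  have ht : IsNilpotent (t - t ^ 2) := by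
    apply IsNilpotent.of_pow (m := 2)
    have : (t - t ^ 2) ^ 2 =
        (a - a ^ 3) * (-(16 * a ^ 5 + 160 * a ^ 4 + 600 * a ^ 3 + 1040 * a ^ 2 + 929 * a + 810))
          + (6 : A) * (159 * a ^ 2 + 135 * a) := by
      rw [htdef]; ring
    rw [this]
    exact (Commute.all _ _).isNilpotent_add
      ((Commute.all _ _).isNilpotent_mul_right h1)
      ((Commute.all _ _).isNilpotent_mul_right h6)
  have hs : IsNilpotent (s - s ^ 2) := by
    apply IsNilpotent.of_pow (m := 2)
    have : (s - s ^ 2) ^ 2 =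
        (a - a ^ 3) * (-(16 * a ^ 5 + 128 * a ^ 4 + 384 * a ^ 3 + 544 * a ^ 2 + 452 * a + 432))
          + (6 : A) * (78 * a ^ 2 + 72 * a) := by
      rw [hsdef]; ring
    rw [this]
    exact (Commute.all _ _).isNilpotent_add
      ((Commute.all _ _).isNilpotent_mul_right h1)
      ((Commute.all _ _).isNilpotent_mul_right h6)
  obtain ⟨e, he, het⟩ := lift_idem_aux t ht
  obtain ⟨g, hg, hgs⟩ := lift_idem_aux s hs
  refine ⟨e - g, ?_, ?_⟩
  · linear_combination (e + 1 - 3 * g) * he + (3 * e - g - 1) * hg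
  · have : a - (e - g) = -(e - t) + (g - s) := by
      rw [htdef, hsdef]; ring
    rw [this]
    exact (Commute.all _ _).isNilpotent_add het.neg hgs

theorem stmt_1 (R : Type*) [Ring R] (h : ∀ a : R, IsNilpotent (a - a ^ 3)) :
    ∀ a : R, ∃ p w : R, p ^ 3 = p ∧ IsNilpotent w ∧ Commute p w ∧ a = p + w := by
  intro a
  have hcomm : ∀ x ∈ ({a} : Set R), ∀ y ∈ ({a} : Set R), x * y = y * x := by
    intro x hx y hy
    rw [Set.mem_singleton_iff] at hx hy
    subst hx; subst hy; rfl
  set S := Subring.closure ({a} : Set R) with hS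
  have hc : ∀ x y : S, x * y = y * x := by
    rintro ⟨x, hx⟩ ⟨y, hy⟩
    have hle := Subring.closure_le_centralizer_centralizer ({a} : Set R)
    exact Subtype.ext <| Set.centralizer_centralizer_comm_of_comm hcomm x (hle hx) y (hle hy)
  have haS : a ∈ S := Subring.subset_closure (Set.mem_singleton a)
  set a' : S := ⟨a, haS⟩ with ha'
  set ι : S →+* R := S.subtype with hι
  have hinj : Function.Injective ι := Subtype.val_injective
  have hιa : ι a' = a := rfl
  have h1 : IsNilpotent (a' - a' ^ 3) := by
    obtain ⟨n, hn⟩ := h a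
    refine ⟨n, hinj ?_⟩
    rw [map_pow, map_sub, map_pow, map_zero, hιa]
    exact hn
  have h6 : IsNilpotent ((6 : S)) := by
    obtain ⟨n, hn⟩ := (h 2).neg
    have h62 : (-(2 - 2 ^ 3) : R) = 6 := by norm_num
    rw [h62] at hn
    refine ⟨n, hinj ?_⟩
    rw [map_pow, map_zero, map_ofNat]
    exact hn
  obtain ⟨p', hp3, hnil⟩ := key_comm hc a' h1 h6
  refine ⟨ι p', ι (a' - p'), ?_, ?_, ?_, ?_⟩
  · have := congrArg ι hp3
    rwa [map_pow] at this
  · obtain ⟨n, hn⟩ := hnil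
    refine ⟨n, ?_⟩
    have := congrArg ι hn
    rwa [map_pow, map_zero] at this
  · have := congrArg ι (hc p' (a' - p'))
    rw [map_mul, map_mul] at this
    exact this
  · have h2 : p' + (a' - p') = a' := by abel
    have := congrArg ι h2
    rw [map_add, hιa] at this
    exact this.symm
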